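/- Every Lebesgue measurable set E ⊆ [0,1]² of positive Lebesgue measure contains a Lebesgue measurable subset E' ⊆ E with λ(E') = λ(E) such that there are no Lebesgue measurable sets A, B ⊆ [0,1] of positive measure with A × B ⊆ E'. -/

import Mathlib

open MeasureTheory Pointwise

/-- The set of pairs with rational difference is null. -/
lemma rational_diff_null :
    volume {p : ℝ × ℝ | ∃ q : ℚ, p.1 - p.2 = (q : ℝ)} = 0 := by
  have : {p : ℝ × ℝ | ∃ q : ℚ, p.1 - p.2 = (q : ℝ)} =
      ⋃ q : ℚ, {p : ℝ × ℝ | p.1 - p.2 = (q : ℝ)} := by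
    ext p; simp [Set.mem_iUnion]
  rw [this]
  refine measure_iUnion_null fun q => ?_
  have hm : MeasurableSet {p : ℝ × ℝ | p.1 - p.2 = (q : ℝ)} := by
    exact measurableSet_eq_fun (measurable_fst.sub measurable_snd) measurable_const
  rw [show (volume : Measure (ℝ × ℝ)) = (volume : Measure ℝ).prod volume from rfl,
    Measure.prod_apply hm]
  have : ∀ x : ℝ, (volume (Prod.mk x ⁻¹' {p : ℝ × ℝ | p.1 - p.2 = (q : ℝ)})) = 0 := by
    intro x
    have : Prod.mk x ⁻¹' {p : ℝ × ℝ | p.1 - p.2 = (q : ℝ)} = {x - (q : ℝ)} := by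
      ext y; simp [Set.mem_preimage]; constructor <;> intro h <;> linarith
    rw [this]; exact measure_singleton _
  simp only [this, lintegral_zero]

/-- Two measurable sets of positive measure have a translate with positive overlap. -/
lemma exists_translate_overlap (A B : Set ℝ) (hA : MeasurableSet A) (hB : MeasurableSet B)
    (hApos : 0 < volume A) (hBpos : 0 < volume B) :
    ∃ t : ℝ, 0 < volume {a : ℝ | a ∈ A ∧ a - t ∈ B} := by
  set S : Set (ℝ × ℝ) := {p : ℝ × ℝ | p.2 ∈ A ∧ p.2 - p.1 ∈ B} with hS
  have hSm : MeasurableSet S := by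
    exact (measurable_snd hA).inter ((measurable_snd.sub measurable_fst) hB)
  have h1 : ((volume : Measure ℝ).prod volume) S = ∫⁻ t, volume {a : ℝ | a ∈ A ∧ a - t ∈ B} := by
    rw [Measure.prod_apply hSm]
    rfl
  have h2 : ((volume : Measure ℝ).prod volume) S = volume B * volume A := by
    rw [Measure.prod_apply_symm hSm]
    have hslice : ∀ y : ℝ, volume ((fun x => (x, y)) ⁻¹' S) =
        A.indicator (fun _ => volume B) y := by
      intro y
      by_cases hy : y ∈ A
      · have : (fun x => (x, y)) ⁻¹' S = Neg.neg ⁻¹' ((fun t => y + t) ⁻¹' B) := by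
          ext t; simp [hS, hy, sub_eq_add_neg]
        rw [this, Measure.measure_preimage_neg _ _, measure_preimage_add, Set.indicator_of_mem hy]
      · have : (fun x => (x, y)) ⁻¹' S = ∅ := by
          ext t; simp [hS, hy]
        rw [this, Set.indicator_of_notMem hy, measure_empty]
    simp_rw [hslice]
    rw [lintegral_indicator hA _, setLIntegral_const]
  by_contra h
  push_neg at h
  have hz : ∀ t : ℝ, volume {a : ℝ | a ∈ A ∧ a - t ∈ B} = 0 := fun t =>
    le_antisymm (h t) zero_le
  rw [h2] at h1
  simp only [hz, lintegral_zero] at h1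
  exact (ENNReal.mul_pos hBpos.ne' hApos.ne').ne' h1

/-- every Lebesgue measurable set `E ⊆ [0,1]²` of positive measure contains a
measurable subset of the same measure containing no rectangle of positive measure. -/
theorem exists_full_subset_without_positive_rectangle
    (E : Set (ℝ × ℝ)) (hE : E ⊆ Set.Icc 0 1 ×ˢ Set.Icc 0 1)
    (hEm : NullMeasurableSet E volume) (hEpos : 0 < volume E) :
    ∃ E' : Set (ℝ × ℝ), E' ⊆ E ∧ NullMeasurableSet E' volume ∧ volume E' = volume E ∧
      ∀ A B : Set ℝ, A ⊆ Set.Icc 0 1 → B ⊆ Set.Icc 0 1 →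
        NullMeasurableSet A volume → NullMeasurableSet B volume →
        0 < volume A → 0 < volume B → ¬ (A ×ˢ B ⊆ E') := by
  set D : Set (ℝ × ℝ) := {p : ℝ × ℝ | ∃ q : ℚ, p.1 - p.2 = (q : ℝ)} with hD
  have hDnull : volume D = 0 := rational_diff_null
  refine ⟨E \ D, Set.diff_subset, hEm.diff (NullMeasurableSet.of_null hDnull),
    measure_diff_null hDnull, ?_⟩
  intro A B hA1 hB1 hAm hBm hApos hBpos hsub
  -- replace A, B by measurable subsets of full measure
  obtain ⟨A', hA'sub, hA'm, hA'ae⟩ := hAm.exists_measurable_subset_ae_eq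
  obtain ⟨B', hB'sub, hB'm, hB'ae⟩ := hBm.exists_measurable_subset_ae_eq
  have hA'pos : 0 < volume A' := by rw [measure_congr hA'ae]; exact hApos
  have hB'pos : 0 < volume B' := by rw [measure_congr hB'ae]; exact hBpos
  obtain ⟨t, ht⟩ := exists_translate_overlap A' B' hA'm hB'm hA'pos hB'pos
  set C : Set ℝ := {a : ℝ | a ∈ A' ∧ a - t ∈ B'} with hC
  have hCm : MeasurableSet C := hA'm.inter ((measurable_sub_const t) hB'm)
  have hsteinhaus := Measure.sub_mem_nhds_zero_of_addHaar_pos (volume : Measure ℝ) C hCm ht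
  -- the set {x | x - t ∈ C - C} is a neighborhood of t
  have hnhds : {x : ℝ | x - t ∈ C - C} ∈ nhds t := by
    have hcont : Continuous (fun x : ℝ => x - t) := continuous_id.sub continuous_const
    have := hcont.continuousAt (x := t)
    have : (fun x : ℝ => x - t) ⁻¹' (C - C) ∈ nhds t := by
      apply hcont.continuousAt.preimage_mem_nhds
      simpa using hsteinhaus
    exact this
  obtain ⟨U, hUsub, hUopen, htU⟩ := mem_nhds_iff.mp hnhds
  obtain ⟨q, hqU⟩ := Rat.denseRange_cast.exists_mem_open hUopen ⟨t, htU⟩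
  have hq : (q : ℝ) - t ∈ C - C := hUsub hqU
  obtain ⟨c1, hc1, c2, hc2, hc⟩ := Set.mem_sub.mp hq
  -- (c1, c2 - t) ∈ A × B has rational difference q
  have ha : c1 ∈ A := hA'sub hc1.1
  have hb : c2 - t ∈ B := hB'sub hc2.2
  have hmem : (c1, c2 - t) ∈ A ×ˢ B := ⟨ha, hb⟩
  have := hsub hmem
  exact this.2 ⟨q, by simp only []; linarith⟩
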